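/- For every λ ∈ ℝ the family (U_t)_{t ≥ 0} is a strongly continuous semigroup of unitary operators on L²(ℝ,ℂ): each U_t is a surjective linear isometry, U_{t+s} = U_t ∘ U_s for all t, s ≥ 0, and for each ψ ∈ L²(ℝ,ℂ) the map t ↦ U_t ψ is continuous from [0,∞) to L²(ℝ,ℂ). -/

import Mathlib

open MeasureTheory Complex

namespace LimitEvolutionAux

noncomputable section

local notation "H" => Lp ℂ 2 (volume : Measure ℝ)

/-- The jump factor. -/
def jc (lam : ℝ) : ℂ := Complex.exp (Complex.I * lam) - 1

/-- The unimodular multiplier. -/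
def mfun (lam t : ℝ) (x : ℝ) : ℂ := 1 + jc lam * (Set.Ico (0:ℝ) t).indicator 1 x

lemma measurable_mfun (lam t : ℝ) : Measurable (mfun lam t) := by
  unfold mfun
  exact measurable_const.add
    (measurable_const.mul ((measurable_one).indicator measurableSet_Ico))

lemma norm_one_add_jc (lam : ℝ) : ‖1 + jc lam‖ = 1 := by
  unfold jc
  rw [add_sub_cancel, Complex.norm_exp]
  simp [Complex.mul_re]

lemma norm_mfun (lam t : ℝ) (x : ℝ) : ‖mfun lam t x‖ = 1 := by
  unfold mfun
  by_cases hx : x ∈ Set.Ico (0:ℝ) t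
  · rw [Set.indicator_of_mem hx]
    simpa using norm_one_add_jc lam
  · rw [Set.indicator_of_notMem hx]
    simp

lemma mfun_mul_mfun_neg (lam t : ℝ) (x : ℝ) :
    mfun (-lam) t x * mfun lam t x = 1 := by
  unfold mfun jc
  by_cases hx : x ∈ Set.Ico (0:ℝ) t
  · rw [Set.indicator_of_mem hx]
    simp only [Pi.one_apply, mul_one, add_sub_cancel]
    rw [← Complex.exp_add]
    push_cast
    ring_nf
    exact Complex.exp_zero
  · rw [Set.indicator_of_notMem hx]
    simp

lemma mfun_add (lam : ℝ) {t s : ℝ} (ht : 0 ≤ t) (hs : 0 ≤ s) (x : ℝ) :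
    mfun lam (t + s) x = mfun lam t x * mfun lam s (x - t) := by
  unfold mfun
  rcases lt_or_ge x 0 with h0 | h0
  · rw [Set.indicator_of_notMem (by simp [Set.mem_Ico]; intro h; linarith),
      Set.indicator_of_notMem (by simp [Set.mem_Ico]; intro h; linarith),
      Set.indicator_of_notMem (by simp [Set.mem_Ico]; intro h; linarith)]
    simp
  · rcases lt_or_ge x t with h1 | h1
    · rw [Set.indicator_of_mem (by exact ⟨h0, by linarith⟩),
        Set.indicator_of_mem (by exact ⟨h0, h1⟩),
        Set.indicator_of_notMem (by simp [Set.mem_Ico]; intro h; linarith)]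
      simp
    · rcases lt_or_ge x (t + s) with h2 | h2
      · rw [Set.indicator_of_mem (by exact ⟨h0, h2⟩),
          Set.indicator_of_notMem (by simp [Set.mem_Ico]; intro h; linarith),
          Set.indicator_of_mem (by constructor <;> [linarith; linarith])]
        simp
      · rw [Set.indicator_of_notMem (by simp [Set.mem_Ico]; intro h; linarith),
          Set.indicator_of_notMem (by simp [Set.mem_Ico]; intro h; linarith),
          Set.indicator_of_notMem (by simp [Set.mem_Ico]; intro h; linarith)]
        simp

/-- Membership in L² of a unimodular multiple. -/
lemma memLp_mul {m : ℝ → ℂ} (hm : Measurable m) (hu : ∀ x, ‖m x‖ = 1) (ψ : H) :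
    MemLp (fun x => m x * (ψ : ℝ → ℂ) x) 2 (volume : Measure ℝ) := by
  have heq : eLpNorm (fun x => m x * (ψ : ℝ → ℂ) x) 2 (volume : Measure ℝ)
      = eLpNorm (ψ : ℝ → ℂ) 2 (volume : Measure ℝ) := by
    refine eLpNorm_congr_norm_ae (Filter.Eventually.of_forall fun x => ?_)
    rw [norm_mul, hu x, one_mul]
  exact ⟨hm.aestronglyMeasurable.mul (Lp.memLp ψ).1, by rw [heq]; exact (Lp.memLp ψ).2⟩

/-- Multiplication by a unimodular measurable function, as a linear isometry of L². -/
def mulLi {m : ℝ → ℂ} (hm : Measurable m) (hu : ∀ x, ‖m x‖ = 1) : H →ₗᵢ[ℂ] H where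
  toFun ψ := (memLp_mul hm hu ψ).toLp _
  map_add' ψ φ := by
    apply Lp.ext
    filter_upwards [MemLp.coeFn_toLp (memLp_mul hm hu (ψ + φ)),
      Lp.coeFn_add ((memLp_mul hm hu ψ).toLp _) ((memLp_mul hm hu φ).toLp _),
      MemLp.coeFn_toLp (memLp_mul hm hu ψ), MemLp.coeFn_toLp (memLp_mul hm hu φ),
      Lp.coeFn_add ψ φ] with x h1 h2 h3 h4 h5
    show ((memLp_mul hm hu (ψ + φ)).toLp _ : ℝ → ℂ) x = _
    rw [h1, h2, Pi.add_apply, h3, h4, h5, Pi.add_apply, mul_add]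
  map_smul' a ψ := by
    apply Lp.ext
    filter_upwards [MemLp.coeFn_toLp (memLp_mul hm hu (a • ψ)),
      Lp.coeFn_smul a ((memLp_mul hm hu ψ).toLp _),
      MemLp.coeFn_toLp (memLp_mul hm hu ψ),
      Lp.coeFn_smul a ψ] with x h1 h2 h3 h4
    simp only [RingHom.id_apply]
    rw [h1, h2, h4]
    simp only [Pi.smul_apply, smul_eq_mul]
    rw [h3]
    ring
  norm_map' ψ := by
    have heq : eLpNorm (fun x => m x * (ψ : ℝ → ℂ) x) 2 (volume : Measure ℝ)
        = eLpNorm (ψ : ℝ → ℂ) 2 (volume : Measure ℝ) := by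
      refine eLpNorm_congr_norm_ae (Filter.Eventually.of_forall fun x => ?_)
      rw [norm_mul, hu x, one_mul]
    have h := Lp.norm_toLp (fun x => m x * (ψ : ℝ → ℂ) x) (memLp_mul hm hu ψ)
    rw [heq, ← Lp.norm_def] at h
    exact h

lemma coeFn_mulLi {m : ℝ → ℂ} (hm : Measurable m) (hu : ∀ x, ‖m x‖ = 1) (ψ : H) :
    (mulLi hm hu ψ : ℝ → ℂ) =ᵐ[volume] fun x => m x * (ψ : ℝ → ℂ) x :=
  MemLp.coeFn_toLp (memLp_mul hm hu ψ)

/-- Translation as a linear isometry of L². -/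
def transLi (t : ℝ) : H →ₗᵢ[ℂ] H :=
  Lp.compMeasurePreservingₗᵢ ℂ (fun x : ℝ => x - t) (measurePreserving_sub_right volume t)

lemma coeFn_transLi (t : ℝ) (ψ : H) :
    (transLi t ψ : ℝ → ℂ) =ᵐ[volume] fun x => (ψ : ℝ → ℂ) (x - t) :=
  Lp.coeFn_compMeasurePreserving ψ (measurePreserving_sub_right volume t)

/-- The evolution operator as a linear isometry. -/
def Umap (lam t : ℝ) : H →ₗᵢ[ℂ] H :=
  (mulLi (measurable_mfun lam t) (norm_mfun lam t)).comp (transLi t)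

lemma ae_comp_sub {f g : ℝ → ℂ} (t : ℝ) (h : f =ᵐ[volume] g) :
    (fun x => f (x - t)) =ᵐ[volume] fun x => g (x - t) :=
  (measurePreserving_sub_right volume t).quasiMeasurePreserving.ae_eq_comp h

lemma coeFn_Umap (lam t : ℝ) (ψ : H) :
    (Umap lam t ψ : ℝ → ℂ) =ᵐ[volume] fun x => mfun lam t x * (ψ : ℝ → ℂ) (x - t) := by
  have h1 := coeFn_mulLi (measurable_mfun lam t) (norm_mfun lam t) (transLi t ψ)
  have h2 := coeFn_transLi t ψ
  filter_upwards [h1, h2] with x hx1 hx2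
  rw [show (Umap lam t ψ : ℝ → ℂ) x
      = (mulLi (measurable_mfun lam t) (norm_mfun lam t) (transLi t ψ) : ℝ → ℂ) x from rfl,
    hx1, hx2]

lemma Umap_add (lam : ℝ) {t s : ℝ} (ht : 0 ≤ t) (hs : 0 ≤ s) (ψ : H) :
    Umap lam (t + s) ψ = Umap lam t (Umap lam s ψ) := by
  refine Lp.ext ?_
  have h1 := coeFn_Umap lam (t + s) ψ
  have h2 := coeFn_Umap lam t (Umap lam s ψ)
  have h3 := ae_comp_sub t (coeFn_Umap lam s ψ)
  filter_upwards [h1, h2, h3] with x hx1 hx2 hx3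
  rw [hx1, hx2, hx3, mfun_add lam ht hs x]
  show mfun lam t x * mfun lam s (x - t) * (ψ : ℝ → ℂ) (x - (t + s))
      = mfun lam t x * (mfun lam s (x - t) * (ψ : ℝ → ℂ) (x - t - s))
  rw [sub_sub]
  ring

lemma Umap_surjective (lam t : ℝ) : Function.Surjective (Umap lam t) := by
  intro φ
  refine ⟨transLi (-t) (mulLi (measurable_mfun (-lam) t) (norm_mfun (-lam) t) φ), ?_⟩
  refine Lp.ext ?_
  have h1 := coeFn_Umap lam t (transLi (-t) (mulLi (measurable_mfun (-lam) t) (norm_mfun (-lam) t) φ))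
  have h2 := ae_comp_sub t (coeFn_transLi (-t) (mulLi (measurable_mfun (-lam) t) (norm_mfun (-lam) t) φ))
  have h3 := ae_comp_sub t ((measurePreserving_sub_right volume (-t)).quasiMeasurePreserving.ae_eq_comp
    (coeFn_mulLi (measurable_mfun (-lam) t) (norm_mfun (-lam) t) φ))
  filter_upwards [h1, h2, h3] with x hx1 hx2 hx3
  rw [hx1, hx2]
  have hx3' : (mulLi (measurable_mfun (-lam) t) (norm_mfun (-lam) t) φ : ℝ → ℂ) (x - t - (-t))
      = mfun (-lam) t (x - t - (-t)) * (φ : ℝ → ℂ) (x - t - (-t)) := hx3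
  rw [show x - t - -t = x by ring] at hx3'
  rw [show x - t - -t = x by ring, hx3', ← mul_assoc,
    mul_comm (mfun lam t x) (mfun (-lam) t x), mfun_mul_mfun_neg lam t x, one_mul]

/-! ### Continuity -/

lemma tendsto_transLi (t₀ : ℝ) (ψ : H) :
    Filter.Tendsto (fun s => transLi s ψ) (nhds t₀) (nhds (transLi t₀ ψ)) := by
  have hg : Continuous (fun s : ℝ =>
      (⟨fun x => x - s, continuous_id.sub continuous_const⟩ : C(ℝ, ℝ))) := by
    apply ContinuousMap.continuous_of_continuous_uncurry
    exact continuous_snd.sub continuous_fst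
  have := Filter.Tendsto.compMeasurePreservingLp (f := fun _ : ℝ => ψ)
    (g := fun s : ℝ => (⟨fun x => x - s, continuous_id.sub continuous_const⟩ : C(ℝ, ℝ)))
    tendsto_const_nhds (hg.tendsto t₀)
    (fun s => measurePreserving_sub_right volume s) (measurePreserving_sub_right volume t₀)
    (by norm_num)
  exact this

lemma norm_indicator_diff_le (s t₀ x : ℝ) :
    ‖(Set.Ico (0:ℝ) s).indicator (1 : ℝ → ℂ) x - (Set.Ico (0:ℝ) t₀).indicator (1 : ℝ → ℂ) x‖
      ≤ ‖(Set.Ico (min s t₀) (max s t₀)).indicator (1 : ℝ → ℂ) x‖ := by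
  by_cases h1 : x ∈ Set.Ico (0:ℝ) s <;> by_cases h2 : x ∈ Set.Ico (0:ℝ) t₀
  · rw [Set.indicator_of_mem h1, Set.indicator_of_mem h2]
    simp
  · have hx : x ∈ Set.Ico (min s t₀) (max s t₀) := by
      simp only [Set.mem_Ico, not_and, not_lt] at h1 h2
      exact ⟨le_trans (min_le_right _ _) (h2 h1.1), lt_of_lt_of_le h1.2 (le_max_left _ _)⟩
    rw [Set.indicator_of_mem h1, Set.indicator_of_notMem h2, Set.indicator_of_mem hx]
    simp
  · have hx : x ∈ Set.Ico (min s t₀) (max s t₀) := by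
      simp only [Set.mem_Ico, not_and, not_lt] at h1 h2
      exact ⟨le_trans (min_le_left _ _) (h1 h2.1), lt_of_lt_of_le h2.2 (le_max_right _ _)⟩
    rw [Set.indicator_of_notMem h1, Set.indicator_of_mem h2, Set.indicator_of_mem hx]
    simp
  · rw [Set.indicator_of_notMem h1, Set.indicator_of_notMem h2]
    simp

lemma tendsto_mulLi (lam t₀ : ℝ) (φ : H) :
    Filter.Tendsto (fun s => mulLi (measurable_mfun lam s) (norm_mfun lam s) φ) (nhds t₀)
      (nhds (mulLi (measurable_mfun lam t₀) (norm_mfun lam t₀) φ)) := by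
  rw [Metric.tendsto_nhds]
  intro ε hε
  set C : ℝ := ‖jc lam‖ + 1 with hC
  have hCpos : (0:ℝ) < C := by positivity
  have hεC : (0:ℝ) < ε / C := by positivity
  obtain ⟨δ, hδpos, hδ⟩ := (Lp.memLp φ).eLpNorm_indicator_le one_le_two (by norm_num) hεC
  filter_upwards [Metric.ball_mem_nhds t₀ hδpos] with s hs
  rw [dist_eq_norm]
  have hcoe : ((mulLi (measurable_mfun lam s) (norm_mfun lam s) φ
        - mulLi (measurable_mfun lam t₀) (norm_mfun lam t₀) φ : H) : ℝ → ℂ)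
      =ᵐ[volume] fun x => mfun lam s x * (φ : ℝ → ℂ) x - mfun lam t₀ x * (φ : ℝ → ℂ) x := by
    filter_upwards [Lp.coeFn_sub (mulLi (measurable_mfun lam s) (norm_mfun lam s) φ)
        (mulLi (measurable_mfun lam t₀) (norm_mfun lam t₀) φ),
      coeFn_mulLi (measurable_mfun lam s) (norm_mfun lam s) φ,
      coeFn_mulLi (measurable_mfun lam t₀) (norm_mfun lam t₀) φ] with x h1 h2 h3
    rw [h1, Pi.sub_apply, h2, h3]
  rw [Lp.norm_def, eLpNorm_congr_ae hcoe]
  have hb : eLpNorm (fun x => mfun lam s x * (φ : ℝ → ℂ) x - mfun lam t₀ x * (φ : ℝ → ℂ) x)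
        2 (volume : Measure ℝ)
      ≤ eLpNorm (jc lam • (Set.Ico (min s t₀) (max s t₀)).indicator ((φ : ℝ → ℂ)))
        2 (volume : Measure ℝ) := by
    refine eLpNorm_mono_ae (Filter.Eventually.of_forall fun x => ?_)
    have key : ‖mfun lam s x - mfun lam t₀ x‖
        ≤ ‖jc lam‖ * ‖(Set.Ico (min s t₀) (max s t₀)).indicator (1 : ℝ → ℂ) x‖ := by
      unfold mfun
      rw [show (1 + jc lam * (Set.Ico (0:ℝ) s).indicator 1 x)
            - (1 + jc lam * (Set.Ico (0:ℝ) t₀).indicator 1 x)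
          = jc lam * ((Set.Ico (0:ℝ) s).indicator 1 x - (Set.Ico (0:ℝ) t₀).indicator 1 x)
          by ring, norm_mul]
      exact mul_le_mul_of_nonneg_left (norm_indicator_diff_le s t₀ x) (norm_nonneg _)
    calc ‖mfun lam s x * (φ : ℝ → ℂ) x - mfun lam t₀ x * (φ : ℝ → ℂ) x‖
        = ‖mfun lam s x - mfun lam t₀ x‖ * ‖(φ : ℝ → ℂ) x‖ := by
          rw [← sub_mul, norm_mul]
      _ ≤ (‖jc lam‖ * ‖(Set.Ico (min s t₀) (max s t₀)).indicator (1 : ℝ → ℂ) x‖)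
            * ‖(φ : ℝ → ℂ) x‖ := mul_le_mul_of_nonneg_right key (norm_nonneg _)
      _ = ‖(jc lam • (Set.Ico (min s t₀) (max s t₀)).indicator ((φ : ℝ → ℂ))) x‖ := by
          by_cases hx : x ∈ Set.Ico (min s t₀) (max s t₀)
          · rw [Set.indicator_of_mem hx, Pi.smul_apply, Set.indicator_of_mem hx]
            simp [norm_smul]
          · rw [Set.indicator_of_notMem hx, Pi.smul_apply, Set.indicator_of_notMem hx]
            simp
  have hmeas : volume (Set.Ico (min s t₀) (max s t₀)) ≤ ENNReal.ofReal δ := by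
    rw [Real.volume_Ico]
    apply ENNReal.ofReal_le_ofReal
    have hs' : |s - t₀| < δ := by simpa [Real.dist_eq] using hs
    rw [max_sub_min_eq_abs]
    first
    | linarith [hs']
    | (rw [abs_sub_comm]; linarith [hs'])
  have hδ' := hδ _ measurableSet_Ico hmeas
  have hb2 : eLpNorm (jc lam • (Set.Ico (min s t₀) (max s t₀)).indicator ((φ : ℝ → ℂ)))
        2 (volume : Measure ℝ)
      ≤ (‖jc lam‖₊ : ENNReal) * ENNReal.ofReal (ε / C) := by
    rw [eLpNorm_const_smul]
    exact mul_le_mul_right hδ' _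
  have hfin : ((‖jc lam‖₊ : ENNReal) * ENNReal.ofReal (ε / C)) ≠ ⊤ :=
    ENNReal.mul_ne_top ENNReal.coe_ne_top ENNReal.ofReal_ne_top
  calc (eLpNorm (fun x => mfun lam s x * (φ : ℝ → ℂ) x - mfun lam t₀ x * (φ : ℝ → ℂ) x)
        2 (volume : Measure ℝ)).toReal
      ≤ ((‖jc lam‖₊ : ENNReal) * ENNReal.ofReal (ε / C)).toReal :=
        ENNReal.toReal_mono hfin (le_trans hb hb2)
    _ = ‖jc lam‖ * (ε / C) := by
        rw [ENNReal.toReal_mul, ENNReal.coe_toReal, coe_nnnorm,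
          ENNReal.toReal_ofReal (le_of_lt hεC)]
    _ < C * (ε / C) := by
        apply mul_lt_mul_of_pos_right _ hεC
        rw [hC]; linarith
    _ = ε := by field_simp

lemma tendsto_Umap (lam t₀ : ℝ) (ψ : H) :
    Filter.Tendsto (fun s => Umap lam s ψ) (nhds t₀) (nhds (Umap lam t₀ ψ)) := by
  rw [tendsto_iff_dist_tendsto_zero]
  have h1 : Filter.Tendsto (fun s => dist (transLi s ψ) (transLi t₀ ψ)) (nhds t₀) (nhds 0) :=
    tendsto_iff_dist_tendsto_zero.1 (tendsto_transLi t₀ ψ)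
  have h2 : Filter.Tendsto (fun s =>
      dist (mulLi (measurable_mfun lam s) (norm_mfun lam s) (transLi t₀ ψ))
        (mulLi (measurable_mfun lam t₀) (norm_mfun lam t₀) (transLi t₀ ψ)))
      (nhds t₀) (nhds 0) :=
    tendsto_iff_dist_tendsto_zero.1 (tendsto_mulLi lam t₀ (transLi t₀ ψ))
  refine squeeze_zero (fun s => dist_nonneg) (fun s => ?_) (by simpa using h1.add h2)
  calc dist (Umap lam s ψ) (Umap lam t₀ ψ)
      ≤ dist (Umap lam s ψ) (mulLi (measurable_mfun lam s) (norm_mfun lam s) (transLi t₀ ψ))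
        + dist (mulLi (measurable_mfun lam s) (norm_mfun lam s) (transLi t₀ ψ))
          (Umap lam t₀ ψ) := dist_triangle _ _ _
    _ = dist (transLi s ψ) (transLi t₀ ψ)
        + dist (mulLi (measurable_mfun lam s) (norm_mfun lam s) (transLi t₀ ψ))
          (mulLi (measurable_mfun lam t₀) (norm_mfun lam t₀) (transLi t₀ ψ)) := by
        rw [show Umap lam s ψ
            = mulLi (measurable_mfun lam s) (norm_mfun lam s) (transLi s ψ) from rfl,
          show Umap lam t₀ ψ
            = mulLi (measurable_mfun lam t₀) (norm_mfun lam t₀) (transLi t₀ ψ) from rfl,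
          LinearIsometry.dist_map]

end

end LimitEvolutionAux

open LimitEvolutionAux

/-- For every `λ ∈ ℝ`, the operators `(U_t ψ)(x) = ψ(x-t)·(1 + (e^{iλ}-1)·𝟙_{[0,t)}(x))`,
`t ≥ 0`, form a strongly continuous semigroup of unitary (surjective isometric) operators
on `L²(ℝ,ℂ)`. -/
theorem limit_evolution_unitary_semigroup (lam : ℝ) :
    ∃ U : ℝ → (Lp ℂ 2 (volume : Measure ℝ) ≃ₗᵢ[ℂ] Lp ℂ 2 (volume : Measure ℝ)),
      (∀ t : ℝ, 0 ≤ t → ∀ ψ : Lp ℂ 2 (volume : Measure ℝ),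
        (U t ψ : ℝ → ℂ) =ᵐ[volume] fun x =>
          (ψ : ℝ → ℂ) (x - t) *
            (1 + (Complex.exp (Complex.I * lam) - 1) * (Set.Ico (0:ℝ) t).indicator 1 x)) ∧
      (∀ t s : ℝ, 0 ≤ t → 0 ≤ s → ∀ ψ : Lp ℂ 2 (volume : Measure ℝ),
        U (t + s) ψ = U t (U s ψ)) ∧
      (∀ ψ : Lp ℂ 2 (volume : Measure ℝ),
        ContinuousOn (fun t : ℝ => U t ψ) (Set.Ici 0)) := by
  have hcoe : ∀ r : ℝ, ∀ χ : Lp ℂ 2 (volume : Measure ℝ),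
      (LinearIsometryEquiv.ofSurjective (Umap lam r) (Umap_surjective lam r)) χ
        = Umap lam r χ := fun r χ => by
    rw [LinearIsometryEquiv.coe_ofSurjective]
  refine ⟨fun t => LinearIsometryEquiv.ofSurjective (Umap lam t) (Umap_surjective lam t),
    ?_, ?_, ?_⟩
  · intro t ht ψ
    rw [hcoe]
    filter_upwards [coeFn_Umap lam t ψ] with x hx
    rw [hx]
    unfold mfun jc
    ring
  · intro t s ht hs ψ
    rw [hcoe, hcoe, hcoe, Umap_add lam ht hs]
  · intro ψ
    have : (fun t : ℝ => (LinearIsometryEquiv.ofSurjective (Umap lam t)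
        (Umap_surjective lam t)) ψ) = fun t : ℝ => Umap lam t ψ := by
      funext t; rw [hcoe]
    rw [this]
    exact (continuous_iff_continuousAt.2 fun t₀ => tendsto_Umap lam t₀ ψ).continuousOn
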